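/- Let μ be a distribution on a metric space and μ_n the empirical distribution placing mass 1/n on the point masses of a uniform distribution μ over n fixed points x_1,...,x_n that are pairwise at distance at least ε. If κ_n denotes the fraction of the points x_i receiving zero empirical mass, then W_p(μ̂_n, μ_n) ≥ ε·κ_n^{1/p}, where μ̂_n is the empirical measure of n i.i.d. draws from μ_n. -/

import Mathlib

open MeasureTheory
open scoped ENNReal

/-- The Wasserstein distance of order `p` on a metric space: the infimum over all
couplings `ξ` of `μ` and `ν` of `(∫ dist(x,y)^p dξ)^{1/p}`. -/
noncomputable def wassersteinDist {α : Type*} [MetricSpace α] [MeasurableSpace α]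
    (p : ℝ) (μ ν : Measure α) : ℝ :=
  ((⨅ ξ ∈ {ξ : Measure (α × α) | ξ.map Prod.fst = μ ∧ ξ.map Prod.snd = ν},
      ∫⁻ q, ENNReal.ofReal (dist q.1 q.2 ^ p) ∂ξ) ^ (1 / p)).toReal

/-- The empirical measure of an `n`-tuple of points: mass `1/n` at each `x i`. -/
noncomputable def empiricalMeasure {α : Type*} [MeasurableSpace α] {n : ℕ}
    (x : Fin n → α) : Measure α :=
  (n : ℝ≥0∞)⁻¹ • ∑ i, Measure.dirac (x i)

lemma empiricalMeasure_apply {α : Type*} [MeasurableSpace α] [MeasurableSingletonClass α]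
    {n : ℕ} (x : Fin n → α) {s : Set α} (hs : MeasurableSet s) :
    empiricalMeasure x s = (n : ℝ≥0∞)⁻¹ * ∑ i, s.indicator 1 (x i) := by
  simp [empiricalMeasure, Measure.smul_apply, Measure.finset_sum_apply,
    Measure.dirac_apply' _ hs, smul_eq_mul]

lemma empiricalMeasure_univ {α : Type*} [MeasurableSpace α] [MeasurableSingletonClass α]
    {n : ℕ} (hn : 0 < n) (x : Fin n → α) :
    empiricalMeasure x Set.univ = 1 := by
  rw [empiricalMeasure_apply x MeasurableSet.univ]
  simp only [Set.indicator_univ, Pi.one_apply, Finset.sum_const, Finset.card_univ,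
    Fintype.card_fin, nsmul_eq_mul, mul_one]
  exact ENNReal.inv_mul_cancel (by exact_mod_cast hn.ne') (by simp)

/-- Wasserstein lower bound for missed separated points:
let `μ_n` be uniform on points `x_1, …, x_n` that are pairwise at distance at
least `ε`, and let `μ̂_n` be the empirical measure of `n` samples from `μ_n`
(each sample lying in `{x_1, …, x_n}`).  If `κ_n` is the fraction of the points
`x_i` receiving zero empirical mass (i.e. `x i ∉ range y`), then
`W_p(μ̂_n, μ_n) ≥ ε κ_n^{1/p}`. -/
theorem wasserstein_missed_points_lower_bound
    {α : Type*} [MetricSpace α] [MeasurableSpace α] [BorelSpace α]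
    (p : ℝ) (hp : 1 ≤ p) {n : ℕ} (hn : 0 < n)
    (ε : ℝ) (hε : 0 < ε)
    (x : Fin n → α) (hsep : ∀ i j, i ≠ j → ε ≤ dist (x i) (x j))
    (y : Fin n → α) (hy : ∀ i, y i ∈ Set.range x) :
    ε * ((Nat.card {i : Fin n // x i ∉ Set.range y} : ℝ) / n) ^ (1 / p)
      ≤ wassersteinDist p (empiricalMeasure y) (empiricalMeasure x) := by
  classical
  have hp0 : 0 < p := lt_of_lt_of_le one_pos hp
  have hn' : (n : ℝ≥0∞) ≠ 0 := by exact_mod_cast hn.ne'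
  set k : ℕ := Nat.card {i : Fin n // x i ∉ Set.range y} with hkdef
  set M : Set α := Set.range x \ Set.range y with hMdef
  have hyfin : (Set.range y).Finite := Set.finite_range y
  have hxfin : (Set.range x).Finite := Set.finite_range x
  have hRy : MeasurableSet (Set.range y) := hyfin.measurableSet
  have hRx : MeasurableSet (Set.range x) := hxfin.measurableSet
  have hM : MeasurableSet M := hRx.diff hRy
  have hkcard : k = (Finset.univ.filter fun i => x i ∉ Set.range y).card := by
    rw [hkdef, Nat.card_eq_fintype_card, Fintype.card_subtype]
  have hsumM : ∑ i, M.indicator (1 : α → ℝ≥0∞) (x i) = (k : ℝ≥0∞) := by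
    have h1 : ∀ i, M.indicator (1 : α → ℝ≥0∞) (x i)
        = if x i ∉ Set.range y then 1 else 0 := by
      intro i
      by_cases h : x i ∈ Set.range y <;>
        simp [Set.indicator_apply, hMdef, h, Set.mem_range_self]
    rw [Finset.sum_congr rfl fun i _ => h1 i, Finset.sum_boole, hkcard]
  have hμnM : empiricalMeasure x M = (k : ℝ≥0∞) / n := by
    rw [empiricalMeasure_apply x hM, hsumM, ENNReal.div_eq_inv_mul]
  have hmuyc : empiricalMeasure y (Set.range y)ᶜ = 0 := by
    rw [empiricalMeasure_apply y hRy.compl]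
    have h0 : ∀ i, (Set.range y)ᶜ.indicator (1 : α → ℝ≥0∞) (y i) = 0 := by
      intro i; simp [Set.indicator_apply, Set.mem_range_self]
    simp [h0]
  have hμnc : empiricalMeasure x (Set.range x)ᶜ = 0 := by
    rw [empiricalMeasure_apply x hRx.compl]
    have h0 : ∀ i, (Set.range x)ᶜ.indicator (1 : α → ℝ≥0∞) (x i) = 0 := by
      intro i; simp [Set.indicator_apply, Set.mem_range_self]
    simp [h0]
  have hdist : ∀ a ∈ Set.range y, ∀ b ∈ M, ε ≤ dist a b := by
    rintro a ha b hb
    obtain ⟨i, hi⟩ := hb.1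
    obtain ⟨j, hj⟩ := ha
    obtain ⟨i', hi'⟩ := hy j
    have hne : i' ≠ i := by
      rintro rfl
      exact hb.2 ⟨j, by rw [← hi']; exact hi⟩
    calc ε ≤ dist (x i') (x i) := hsep i' i hne
    _ = dist a b := by rw [hi, hi', hj]
  set E : Set (α × α) := (Set.range y) ×ˢ M with hEdef
  have hE : MeasurableSet E := hRy.prod hM
  set f : α × α → ℝ≥0∞ := fun q => ENNReal.ofReal (dist q.1 q.2 ^ p) with hfdef
  set I : ℝ≥0∞ := ⨅ ξ ∈ {ξ : Measure (α × α) | ξ.map Prod.fst = empiricalMeasure y ∧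
      ξ.map Prod.snd = empiricalMeasure x}, ∫⁻ q, f q ∂ξ with hIdef
  have hW : wassersteinDist p (empiricalMeasure y) (empiricalMeasure x)
      = (I ^ (1 / p)).toReal := rfl
  -- key lower bound for every coupling
  have key : ∀ ξ : Measure (α × α), ξ.map Prod.fst = empiricalMeasure y →
      ξ.map Prod.snd = empiricalMeasure x →
      ENNReal.ofReal (ε ^ p) * ((k : ℝ≥0∞) / n) ≤ ∫⁻ q, f q ∂ξ := by
    intro ξ h1 h2
    have hsnd : ξ (Prod.snd ⁻¹' M) = (k : ℝ≥0∞) / n := by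
      rw [← Measure.map_apply measurable_snd hM, h2, hμnM]
    have hfst : ξ (Prod.fst ⁻¹' (Set.range y)ᶜ) = 0 := by
      rw [← Measure.map_apply measurable_fst hRy.compl, h1, hmuyc]
    have hsub : Prod.snd ⁻¹' M ⊆ E ∪ Prod.fst ⁻¹' (Set.range y)ᶜ := by
      rintro ⟨a, b⟩ hq
      by_cases ha : a ∈ Set.range y
      · exact Or.inl ⟨ha, hq⟩
      · exact Or.inr ha
    have hξE : (k : ℝ≥0∞) / n ≤ ξ E := by
      calc (k : ℝ≥0∞) / n = ξ (Prod.snd ⁻¹' M) := hsnd.symm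
      _ ≤ ξ E + ξ (Prod.fst ⁻¹' (Set.range y)ᶜ) :=
        le_trans (measure_mono hsub) (measure_union_le _ _)
      _ = ξ E := by rw [hfst, add_zero]
    have hfge : ∀ q, E.indicator (fun _ => ENNReal.ofReal (ε ^ p)) q ≤ f q := by
      intro q
      by_cases hq : q ∈ E
      · rw [Set.indicator_of_mem hq]
        exact ENNReal.ofReal_le_ofReal
          (Real.rpow_le_rpow hε.le (hdist q.1 hq.1 q.2 hq.2) hp0.le)
      · rw [Set.indicator_of_notMem hq]; exact zero_le
    calc ENNReal.ofReal (ε ^ p) * ((k : ℝ≥0∞) / n)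
        ≤ ENNReal.ofReal (ε ^ p) * ξ E := by gcongr
      _ = ∫⁻ q, E.indicator (fun _ => ENNReal.ofReal (ε ^ p)) q ∂ξ :=
        (lintegral_indicator_const hE _).symm
      _ ≤ ∫⁻ q, f q ∂ξ := lintegral_mono hfge
  have hinf : ENNReal.ofReal (ε ^ p) * ((k : ℝ≥0∞) / n) ≤ I :=
    le_iInf₂ fun ξ hξ => key ξ hξ.1 hξ.2
  -- finiteness of I via the product coupling
  have hprob_x : IsProbabilityMeasure (empiricalMeasure x) :=
    ⟨empiricalMeasure_univ hn x⟩
  have hprob_y : IsProbabilityMeasure (empiricalMeasure y) :=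
    ⟨empiricalMeasure_univ hn y⟩
  have hIne : I ≠ ∞ := by
    set ξ₀ : Measure (α × α) := (empiricalMeasure y).prod (empiricalMeasure x) with hξ₀
    have hmem : ξ₀.map Prod.fst = empiricalMeasure y ∧
        ξ₀.map Prod.snd = empiricalMeasure x := by
      constructor
      · rw [hξ₀, Measure.map_fst_prod, measure_univ, one_smul]
      · rw [hξ₀, Measure.map_snd_prod, measure_univ, one_smul]
    set C : ℝ≥0∞ := ∑ ij : Fin n × Fin n, ENNReal.ofReal (dist (y ij.1) (x ij.2) ^ p)
      with hC
    have hz : ξ₀ ((Set.range y ×ˢ Set.range x)ᶜ) = 0 := by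
      have hsub : (Set.range y ×ˢ Set.range x)ᶜ ⊆
          Prod.fst ⁻¹' (Set.range y)ᶜ ∪ Prod.snd ⁻¹' (Set.range x)ᶜ := by
        rintro ⟨a, b⟩ hq
        by_cases ha : a ∈ Set.range y
        · exact Or.inr fun hb => hq ⟨ha, hb⟩
        · exact Or.inl ha
      refine le_antisymm (le_trans (measure_mono hsub)
        (le_trans (measure_union_le _ _) ?_)) zero_le
      rw [← Measure.map_apply measurable_fst hRy.compl, hmem.1, hmuyc,
        ← Measure.map_apply measurable_snd hRx.compl, hmem.2, hμnc, add_zero]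
    have hae : ∀ᵐ q ∂ξ₀, f q ≤ C := by
      rw [ae_iff]
      refine measure_mono_null ?_ hz
      intro q hq
      simp only [Set.mem_setOf_eq, not_le] at hq
      intro hqmem
      obtain ⟨⟨i, hi⟩, ⟨j, hj⟩⟩ := hqmem
      have hterm : f q = ENNReal.ofReal (dist (y i) (x j) ^ p) := by
        rw [hfdef]; simp only; rw [← hi, ← hj]
      have : f q ≤ C := by
        rw [hterm, hC]
        exact Finset.single_le_sum (f := fun ij : Fin n × Fin n =>
          ENNReal.ofReal (dist (y ij.1) (x ij.2) ^ p))
          (fun _ _ => zero_le) (Finset.mem_univ (i, j))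
      exact absurd this (not_le_of_gt hq)
    have hCfin : C ≠ ∞ := by
      rw [hC]
      exact (ENNReal.sum_lt_top.mpr fun ij _ => ENNReal.ofReal_lt_top).ne
    have hIle : I ≤ C := by
      refine le_trans (iInf₂_le ξ₀ hmem) ?_
      calc ∫⁻ q, f q ∂ξ₀ ≤ ∫⁻ _, C ∂ξ₀ := lintegral_mono_ae hae
        _ = C * ξ₀ Set.univ := lintegral_const C
        _ = C := by rw [measure_univ, mul_one]
    exact ne_top_of_le_ne_top hCfin hIle
  -- conclude
  have hrpow : (ENNReal.ofReal (ε ^ p) * ((k : ℝ≥0∞) / n)) ^ (1 / p) ≤ I ^ (1 / p) :=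
    ENNReal.rpow_le_rpow hinf (by positivity)
  have hlhs : (ENNReal.ofReal (ε ^ p) * ((k : ℝ≥0∞) / n)) ^ (1 / p)
      = ENNReal.ofReal ε * ((k : ℝ≥0∞) / n) ^ (1 / p) := by
    rw [ENNReal.mul_rpow_of_nonneg _ _ (by positivity : (0:ℝ) ≤ 1 / p)]
    congr 1
    rw [← ENNReal.ofReal_rpow_of_pos hε, ← ENNReal.rpow_mul,
      mul_one_div, div_self hp0.ne', ENNReal.rpow_one]
  rcases Nat.eq_zero_or_pos k with hk0 | hkpos
  · rw [hk0]
    simp only [Nat.cast_zero, zero_div, Real.zero_rpow (one_div_ne_zero hp0.ne'), mul_zero]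
    exact ENNReal.toReal_nonneg
  · rw [hW, ← ENNReal.ofReal_le_iff_le_toReal
      (ENNReal.rpow_ne_top_of_nonneg (by positivity) hIne)]
    have hkn : (0:ℝ) < (k : ℝ) / n := by positivity
    calc ENNReal.ofReal (ε * ((k : ℝ) / n) ^ (1 / p))
        = ENNReal.ofReal ε * ENNReal.ofReal (((k : ℝ) / n) ^ (1 / p)) :=
        ENNReal.ofReal_mul hε.le
      _ = ENNReal.ofReal ε * (ENNReal.ofReal ((k : ℝ) / n)) ^ (1 / p) := by
        rw [ENNReal.ofReal_rpow_of_pos hkn]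
      _ = ENNReal.ofReal ε * ((k : ℝ≥0∞) / n) ^ (1 / p) := by
        rw [ENNReal.ofReal_div_of_pos (by exact_mod_cast hn),
          ENNReal.ofReal_natCast, ENNReal.ofReal_natCast]
      _ = (ENNReal.ofReal (ε ^ p) * ((k : ℝ≥0∞) / n)) ^ (1 / p) := hlhs.symm
      _ ≤ I ^ (1 / p) := hrpow
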